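/- The robust feasibility condition 'for all U subset V: max over xi in U1 of sum_{v in U} xi_v + max over eta in U2 of sum_{k in N(U)} sum_{v in N(k)} eta_v w_{vk} <= sum_{l in N_L(U)} b_hat x_l + sum_{p in N_P(U)} bbar_p' holds if and only if for every pair of realizations (xi, eta) in U1 x U2 the corresponding transportation system (with steerable demands xi and residual capacities reduced by eta according to w) is feasible. -/

import Mathlib

open Finset

lemma hall_flow {V K : Type*} [Fintype V] [DecidableEq V] [DecidableEq K]
    (N : V → Finset K) (c : K → ℕ) (d : V → ℕ)
    (hall : ∀ U : Finset V, ∑ v ∈ U, d v ≤ ∑ k ∈ U.biUnion N, c k) :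
    ∃ z : V → K → ℕ, (∀ v k, k ∉ N v → z v k = 0) ∧
      (∀ v, d v ≤ ∑ k ∈ N v, z v k) ∧
      (∀ k, ∑ v ∈ univ.filter (fun v => k ∈ N v), z v k ≤ c k) := by
  classical
  set K0 : Finset K := univ.biUnion N with hK0
  have hNK0 : ∀ v, N v ⊆ K0 := fun v => subset_biUnion_of_mem N (mem_univ v)
  -- blown-up types
  set ι := (Σ v : V, Fin (d v))
  set α := (Σ k : {k // k ∈ K0}, Fin (c k.val))
  set t : ι → Finset α := fun xx => univ.filter (fun a => (a.1 : K) ∈ N xx.1) with ht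
  -- Claim C : cardinality of first-component filters
  have claimC : ∀ W : Finset K, W ⊆ K0 →
      (univ.filter (fun a : α => (a.1 : K) ∈ W)).card = ∑ k ∈ W, c k := by
    intro W hW
    have hdecomp : (univ.filter (fun a : α => (a.1 : K) ∈ W)) =
        (univ.filter (fun k : {k // k ∈ K0} => (k : K) ∈ W)).sigma (fun _ => univ) := by
      ext ⟨k, j⟩
      rw [Finset.mem_sigma, Finset.mem_filter]
      simp
    rw [hdecomp, Finset.card_sigma]
    simp only [Finset.card_univ, Fintype.card_fin]
    rw [univ_eq_attach, Finset.sum_filter, Finset.sum_attach K0 (fun k => if k ∈ W then c k else 0),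
      ← Finset.sum_filter]
    congr 1
    rw [Finset.filter_mem_eq_inter, Finset.inter_eq_right.mpr hW]
  -- Hall condition for the blown-up bipartite graph
  have hallC : ∀ s : Finset ι, s.card ≤ (s.biUnion t).card := by
    intro s
    set U : Finset V := s.image Sigma.fst with hU
    have h1 : s.card ≤ ∑ v ∈ U, d v := by
      have hsub : s ⊆ U.sigma (fun _ => univ) := by
        intro x hx
        rw [Finset.mem_sigma]
        exact ⟨Finset.mem_image_of_mem _ hx, Finset.mem_univ _⟩
      calc s.card ≤ (U.sigma (fun _ => univ)).card := Finset.card_le_card hsub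
        _ = ∑ v ∈ U, d v := by
            rw [Finset.card_sigma]; simp
    have h2 : s.biUnion t = univ.filter (fun a : α => (a.1 : K) ∈ U.biUnion N) := by
      ext a
      simp only [Finset.mem_biUnion, Finset.mem_filter, Finset.mem_univ, true_and, ht, hU,
        Finset.mem_image]
      constructor
      · rintro ⟨x, hx, hax⟩
        exact ⟨x.1, ⟨x, hx, rfl⟩, hax⟩
      · rintro ⟨v, ⟨x, hx, rfl⟩, hav⟩
        exact ⟨x, hx, by simp [hav]⟩
    rw [h2, claimC _ (Finset.biUnion_subset.mpr (fun v _ => hNK0 v))]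
    exact h1.trans (hall U)
  obtain ⟨f, hfinj, hft⟩ := (Finset.all_card_le_biUnion_card_iff_exists_injective t).mp hallC
  have hfN : ∀ x : ι, ((f x).1 : K) ∈ N x.1 := by
    intro x
    exact (Finset.mem_filter.mp (hft x)).2
  -- define the flow
  refine ⟨fun v k => (univ.filter (fun i : Fin (d v) => ((f ⟨v, i⟩).1 : K) = k)).card, ?_, ?_, ?_⟩
  · intro v k hk
    rw [Finset.card_eq_zero, Finset.filter_eq_empty_iff]
    intro i _ hik
    exact hk (hik ▸ hfN ⟨v, i⟩)
  · intro v
    have := Finset.card_eq_sum_card_fiberwise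
      (f := fun i : Fin (d v) => ((f ⟨v, i⟩).1 : K)) (s := univ) (t := N v)
      (fun i _ => hfN ⟨v, i⟩)
    simp only [Finset.card_univ, Fintype.card_fin] at this
    exact this.le
  · intro k
    by_cases hk : k ∈ K0
    · -- count via injectivity
      have hle : ∑ v ∈ univ.filter (fun v => k ∈ N v),
          (univ.filter (fun i : Fin (d v) => ((f ⟨v, i⟩).1 : K) = k)).card ≤
          ∑ v : V, (univ.filter (fun i : Fin (d v) => ((f ⟨v, i⟩).1 : K) = k)).card :=
        Finset.sum_le_sum_of_subset (Finset.filter_subset _ _)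
      have hcard : ∑ v : V, (univ.filter (fun i : Fin (d v) => ((f ⟨v, i⟩).1 : K) = k)).card
          = Fintype.card (Σ v : V, {i : Fin (d v) // ((f ⟨v, i⟩).1 : K) = k}) := by
        rw [Fintype.card_sigma]
        refine Finset.sum_congr rfl (fun v _ => ?_)
        rw [Fintype.card_subtype]
      have hinj : Fintype.card (Σ v : V, {i : Fin (d v) // ((f ⟨v, i⟩).1 : K) = k})
          ≤ Fintype.card {a : α // (a.1 : K) = k} := by
        apply Fintype.card_le_of_injective
          (fun x => ⟨f ⟨x.1, x.2.1⟩, x.2.2⟩)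
        intro x y hxy
        have : f ⟨x.1, x.2.1⟩ = f ⟨y.1, y.2.1⟩ := congrArg Subtype.val hxy
        have h2 := hfinj this
        obtain ⟨v, i, hi⟩ := x
        obtain ⟨w, j, hj⟩ := y
        obtain ⟨rfl, h3⟩ := Sigma.mk.inj_iff.mp h2
        cases eq_of_heq h3
        rfl
      have hfin : Fintype.card {a : α // (a.1 : K) = k} = c k := by
        rw [Fintype.card_subtype]
        have : (univ.filter (fun a : α => (a.1 : K) = k))
            = (univ.filter (fun a : α => (a.1 : K) ∈ ({k} : Finset K))) := by
          apply Finset.filter_congr; intro a _; simp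
        rw [this, claimC {k} (Finset.singleton_subset_iff.mpr hk), Finset.sum_singleton]
      calc _ ≤ _ := hle
        _ = _ := hcard
        _ ≤ _ := hinj
        _ = c k := hfin
    · have : univ.filter (fun v => k ∈ N v) = ∅ := by
        rw [Finset.filter_eq_empty_iff]
        exact fun v _ hv => hk (hNK0 v hv)
      rw [this, Finset.sum_empty]
      exact Nat.zero_le _


/-- The robust Benders feasibility cuts (with worst cases over
the uncertainty sets `U1`, `U2`) hold for every `U ⊆ V` iff for every pair of
realizations `(ξ, η) ∈ U1 × U2` the corresponding transportation system (with
steerable demands `ξ` and capacities reduced by the unsteerable demands `η`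
routed according to `φ`) is feasible. -/
theorem stmt_11 {V L P : Type*} [Fintype V] [DecidableEq V] [DecidableEq L] [DecidableEq P]
    (N : V → Finset (L ⊕ P)) (x : L → ℕ) (bhat : ℕ) (bbar : P → ℕ)
    (φ : V → L ⊕ P) (hφ : ∀ v, φ v ∈ N v)
    (U1 U2 : Finset (V → ℕ)) (hU1 : U1.Nonempty) (hU2 : U2.Nonempty)
    (hres : ∀ η ∈ U2, ∀ k, (∑ v ∈ univ.filter (fun v => φ v = k), η v) ≤
      Sum.elim (fun l => bhat * x l) bbar k) :
    (∀ U : Finset V,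
        U1.sup (fun ξ => ∑ v ∈ U, ξ v) +
          U2.sup (fun η => ∑ v ∈ univ.filter (fun v => φ v ∈ U.biUnion N), η v) ≤
        ∑ k ∈ U.biUnion N, Sum.elim (fun l => bhat * x l) bbar k) ↔
    (∀ ξ ∈ U1, ∀ η ∈ U2,
      ∃ z : V → L ⊕ P → ℕ, (∀ v k, k ∉ N v → z v k = 0) ∧
        (∀ v, ξ v ≤ ∑ k ∈ N v, z v k) ∧
        (∀ k, (∑ v ∈ univ.filter (fun v => φ v = k), η v) +
            (∑ v ∈ univ.filter (fun v => k ∈ N v), z v k) ≤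
          Sum.elim (fun l => bhat * x l) bbar k)) := by
  classical
  set c : L ⊕ P → ℕ := Sum.elim (fun l => bhat * x l) bbar with hc
  have key : ∀ (η : V → ℕ) (W : Finset (L ⊕ P)),
      ∑ k ∈ W, ∑ v ∈ univ.filter (fun v => φ v = k), η v =
      ∑ v ∈ univ.filter (fun v => φ v ∈ W), η v := by
    intro η W
    rw [← Finset.sum_fiberwise_of_maps_to (g := φ) (t := W)
      (fun v hv => (Finset.mem_filter.mp hv).2) η]
    refine Finset.sum_congr rfl fun k hk => ?_
    refine Finset.sum_congr ?_ (fun _ _ => rfl)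
    ext v
    simp only [Finset.mem_filter, Finset.mem_univ, true_and]
    constructor
    · rintro rfl; exact ⟨hk, rfl⟩
    · rintro ⟨-, rfl⟩; rfl
  constructor
  · intro H ξ hξ η hη
    set r : L ⊕ P → ℕ := fun k => ∑ v ∈ univ.filter (fun v => φ v = k), η v with hr
    have hrc : ∀ k, r k ≤ c k := hres η hη
    have hall : ∀ U : Finset V, ∑ v ∈ U, ξ v ≤ ∑ k ∈ U.biUnion N, (c k - r k) := by
      intro U
      have hξle : ∑ v ∈ U, ξ v ≤ U1.sup (fun ξ => ∑ v ∈ U, ξ v) := Finset.le_sup hξ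
      have hηle : ∑ k ∈ U.biUnion N, r k ≤
          U2.sup (fun η => ∑ v ∈ univ.filter (fun v => φ v ∈ U.biUnion N), η v) := by
        rw [hr]
        rw [key η (U.biUnion N)]
        exact Finset.le_sup hη
      have htot : ∑ v ∈ U, ξ v + ∑ k ∈ U.biUnion N, r k ≤ ∑ k ∈ U.biUnion N, c k :=
        le_trans (add_le_add hξle hηle) (H U)
      rw [Finset.sum_tsub_distrib _ (fun k _ => hrc k)]
      exact Nat.le_sub_of_add_le htot
    obtain ⟨z, h0, h1, h2⟩ := hall_flow N (fun k => c k - r k) ξ hall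
    refine ⟨z, h0, h1, fun k => ?_⟩
    calc r k + ∑ v ∈ univ.filter (fun v => k ∈ N v), z v k
        ≤ r k + (c k - r k) := Nat.add_le_add_left (h2 k) _
      _ = c k := Nat.add_sub_cancel' (hrc k)
  · intro H U
    obtain ⟨ξ, hξ, hξeq⟩ := Finset.exists_mem_eq_sup U1 hU1 (fun ξ => ∑ v ∈ U, ξ v)
    obtain ⟨η, hη, hηeq⟩ := Finset.exists_mem_eq_sup U2 hU2
      (fun η => ∑ v ∈ univ.filter (fun v => φ v ∈ U.biUnion N), η v)
    obtain ⟨z, h0, h1, h2⟩ := H ξ hξ η hη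
    rw [hξeq, hηeq]
    set W : Finset (L ⊕ P) := U.biUnion N with hW
    set r : L ⊕ P → ℕ := fun k => ∑ v ∈ univ.filter (fun v => φ v = k), η v with hr
    have step1 : ∑ v ∈ U, ξ v ≤ ∑ k ∈ W, ∑ v ∈ univ.filter (fun v => k ∈ N v), z v k := by
      calc ∑ v ∈ U, ξ v ≤ ∑ v ∈ U, ∑ k ∈ N v, z v k := Finset.sum_le_sum (fun v _ => h1 v)
        _ = ∑ v ∈ U, ∑ k ∈ W, z v k := Finset.sum_congr rfl (fun v hv =>
            Finset.sum_subset (Finset.subset_biUnion_of_mem N hv) (fun k _ hk => h0 v k hk))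
        _ = ∑ k ∈ W, ∑ v ∈ U, z v k := Finset.sum_comm
        _ ≤ ∑ k ∈ W, ∑ v ∈ univ.filter (fun v => k ∈ N v), z v k := by
            refine Finset.sum_le_sum (fun k _ => ?_)
            rw [← Finset.sum_filter_of_ne
              (fun v _ hz => by_contra fun hk => hz (h0 v k hk))]
            exact Finset.sum_le_sum_of_subset
              (Finset.filter_subset_filter _ (Finset.subset_univ U))
    have step2 : ∑ k ∈ W, (r k + ∑ v ∈ univ.filter (fun v => k ∈ N v), z v k) ≤
        ∑ k ∈ W, c k := Finset.sum_le_sum (fun k _ => h2 k)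
    rw [Finset.sum_add_distrib] at step2
    calc ∑ v ∈ U, ξ v + ∑ v ∈ univ.filter (fun v => φ v ∈ W), η v
        = ∑ v ∈ U, ξ v + ∑ k ∈ W, r k := by rw [hr, key η W]
      _ ≤ ∑ k ∈ W, ∑ v ∈ univ.filter (fun v => k ∈ N v), z v k + ∑ k ∈ W, r k :=
          Nat.add_le_add_right step1 _
      _ = ∑ k ∈ W, r k + ∑ k ∈ W, ∑ v ∈ univ.filter (fun v => k ∈ N v), z v k :=
          Nat.add_comm _ _
      _ ≤ ∑ k ∈ W, c k := step2
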